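/- arXiv:1512.05015 — 4 statements merged into one kernel-verified Lean document; each statement's English description precedes it below -/
import Mathlib

section
/- For a real random variable ξ in L² with cumulative distribution function F and α ∈ (0,1), the infimum over y ∈ ℝ of E[y + (1-α)⁻¹(ξ - y)⁺] is attained at y = VaR_α(ξ) := inf{x : F(x) ≥ α}, provided the distribution of ξ has no atoms. -/
open MeasureTheory Filter Topology

/-- For a square-integrable real random variable ξ with atomless law and α ∈ (0,1),
the infimum over y of E[y + (1-α)⁻¹ (ξ - y)⁺] is attained at y = VaR_α(ξ). -/
theorem stmt_0 {Ω : Type*} [MeasurableSpace Ω] (P : Measure Ω) [IsProbabilityMeasure P]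
    (ξ : Ω → ℝ) (hξ : MemLp ξ 2 P)
    (hatomless : ∀ x : ℝ, P {ω | ξ ω = x} = 0)
    (α : ℝ) (hα : α ∈ Set.Ioo (0 : ℝ) 1) :
    ∀ y : ℝ,
      (∫ ω, (sInf {x : ℝ | α ≤ (P {ω' | ξ ω' ≤ x}).toReal}
          + (1 - α)⁻¹ * max (ξ ω - sInf {x : ℝ | α ≤ (P {ω' | ξ ω' ≤ x}).toReal}) 0) ∂P)
      ≤ ∫ ω, (y + (1 - α)⁻¹ * max (ξ ω - y) 0) ∂P := by
  obtain ⟨hα0, hα1⟩ := hα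
  intro y
  -- measurable modification of ξ
  set ξ' : Ω → ℝ := hξ.aestronglyMeasurable.mk ξ with hξ'def
  have hmeas : Measurable ξ' := hξ.aestronglyMeasurable.stronglyMeasurable_mk.measurable
  have hae : ξ =ᵐ[P] ξ' := hξ.aestronglyMeasurable.ae_eq_mk
  have hset : ∀ x : ℝ, P {ω' | ξ ω' ≤ x} = P {ω' | ξ' ω' ≤ x} := fun x =>
    measure_congr (hae.mono fun ω h => by
      change (ξ ω ≤ x) = (ξ' ω ≤ x); rw [h])
  set F : ℝ → ℝ := fun x => (P {ω' | ξ' ω' ≤ x}).toReal with hFdef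
  have hSrw : {x : ℝ | α ≤ (P {ω' | ξ ω' ≤ x}).toReal} = {x : ℝ | α ≤ F x} := by
    ext x; simp only [Set.mem_setOf_eq, hset x, hFdef]
  rw [hSrw]
  set q : ℝ := sInf {x : ℝ | α ≤ F x} with hqdef
  set S : Set ℝ := {x : ℝ | α ≤ F x} with hSdef
  have hFmono : Monotone F := fun a b hab =>
    ENNReal.toReal_mono (measure_ne_top _ _)
      (measure_mono fun ω h => le_trans h hab)
  -- S is nonempty
  have hSne : S.Nonempty := by
    have hmono : Monotone (fun n : ℕ => {ω' | ξ' ω' ≤ (n : ℝ)}) := fun a b hab ω h => by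
      simp only [Set.mem_setOf_eq] at h ⊢
      exact le_trans h (Nat.cast_le.mpr hab)
    have hU : (⋃ n : ℕ, {ω' | ξ' ω' ≤ (n : ℝ)}) = Set.univ := by
      ext ω; simp only [Set.mem_iUnion, Set.mem_setOf_eq, Set.mem_univ, iff_true]
      obtain ⟨n, hn⟩ := exists_nat_ge (ξ' ω)
      exact ⟨n, hn⟩
    have h1 : Tendsto (fun n : ℕ => P {ω' | ξ' ω' ≤ (n : ℝ)}) atTop (𝓝 (P Set.univ)) := by
      have := tendsto_measure_iUnion_atTop (μ := P) hmono
      rwa [hU] at this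
    have h2 : Tendsto (fun n : ℕ => F (n : ℝ)) atTop (𝓝 1) := by
      have := (ENNReal.tendsto_toReal (measure_ne_top P _)).comp h1
      simpa [hFdef, Function.comp_def] using this
    obtain ⟨n, hn⟩ := (Filter.Tendsto.eventually_const_le hα1 h2).exists
    exact ⟨(n : ℝ), hn⟩
  -- S is bounded below
  have hSbdd : BddBelow S := by
    have hanti : Antitone (fun n : ℕ => {ω' | ξ' ω' ≤ -(n : ℝ)}) := fun a b hab ω h => by
      simp only [Set.mem_setOf_eq] at h ⊢
      exact le_trans h (neg_le_neg (Nat.cast_le.mpr hab))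
    have hI : (⋂ n : ℕ, {ω' | ξ' ω' ≤ -(n : ℝ)}) = ∅ := by
      ext ω; simp only [Set.mem_iInter, Set.mem_setOf_eq, Set.mem_empty_iff_false, iff_false,
        not_forall, not_le]
      obtain ⟨n, hn⟩ := exists_nat_ge (-ξ' ω)
      exact ⟨n + 1, by push_cast; linarith⟩
    have h1 : Tendsto (fun n : ℕ => P {ω' | ξ' ω' ≤ -(n : ℝ)}) atTop (𝓝 (P ∅)) := by
      have := tendsto_measure_iInter_atTop (μ := P)
        (s := fun n : ℕ => {ω' | ξ' ω' ≤ -(n : ℝ)})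
        (fun n => (measurableSet_le hmeas measurable_const).nullMeasurableSet) hanti
        ⟨0, measure_ne_top _ _⟩
      rwa [hI] at this
    have h2 : Tendsto (fun n : ℕ => F (-(n : ℝ))) atTop (𝓝 0) := by
      have := (ENNReal.tendsto_toReal (measure_ne_top P _)).comp h1
      simpa [hFdef, Function.comp_def] using this
    obtain ⟨n, hn⟩ := (Filter.Tendsto.eventually_lt_const hα0 h2).exists
    refine ⟨-(n : ℝ), fun x hx => ?_⟩
    by_contra hlt
    push_neg at hlt
    exact absurd (le_trans hx (hFmono hlt.le)) (not_le.mpr hn)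
  -- the atom at any point is zero for ξ'
  have hatom' : ∀ x : ℝ, P {ω | ξ' ω = x} = 0 := fun x => by
    rw [← measure_congr (hae.mono fun ω h => by
      change (ξ ω = x) = (ξ' ω = x); rw [h])]
    exact hatomless x
  -- F q ≥ α
  have hFq_ge : α ≤ F q := by
    have hanti : Antitone (fun n : ℕ => {ω' | ξ' ω' ≤ q + 1 / ((n : ℝ) + 1)}) := by
      intro a b hab ω h
      simp only [Set.mem_setOf_eq] at h ⊢
      have hab' : (a : ℝ) ≤ b := Nat.cast_le.mpr hab
      have hd : 1 / ((b : ℝ) + 1) ≤ 1 / ((a : ℝ) + 1) :=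
        one_div_le_one_div_of_le (by positivity) (by linarith)
      linarith
    have hI : (⋂ n : ℕ, {ω' | ξ' ω' ≤ q + 1 / ((n : ℝ) + 1)}) = {ω' | ξ' ω' ≤ q} := by
      ext ω
      simp only [Set.mem_iInter, Set.mem_setOf_eq]
      constructor
      · intro h
        by_contra hlt
        push_neg at hlt
        obtain ⟨n, hn⟩ := exists_nat_one_div_lt (sub_pos.mpr hlt)
        exact absurd (h n) (by push_neg; linarith)
      · intro h n
        have : (0 : ℝ) < 1 / ((n : ℝ) + 1) := by positivity
        linarith
    have h1 : Tendsto (fun n : ℕ => P {ω' | ξ' ω' ≤ q + 1 / ((n : ℝ) + 1)}) atTop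
        (𝓝 (P {ω' | ξ' ω' ≤ q})) := by
      have := tendsto_measure_iInter_atTop (μ := P)
        (s := fun n : ℕ => {ω' | ξ' ω' ≤ q + 1 / ((n : ℝ) + 1)})
        (fun n => (measurableSet_le hmeas measurable_const).nullMeasurableSet) hanti
        ⟨0, measure_ne_top _ _⟩
      rwa [hI] at this
    have hge : ∀ n : ℕ, ENNReal.ofReal α ≤ P {ω' | ξ' ω' ≤ q + 1 / ((n : ℝ) + 1)} := by
      intro n
      have hpos : (0 : ℝ) < 1 / ((n : ℝ) + 1) := by positivity
      obtain ⟨z, hzS, hz⟩ := exists_lt_of_csInf_lt hSne (by linarith : q < q + 1 / ((n : ℝ) + 1))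
      have : α ≤ F (q + 1 / ((n : ℝ) + 1)) := le_trans hzS (hFmono hz.le)
      exact (ENNReal.ofReal_le_iff_le_toReal (measure_ne_top _ _)).mpr this
    have : ENNReal.ofReal α ≤ P {ω' | ξ' ω' ≤ q} := ge_of_tendsto h1 (Eventually.of_forall hge)
    exact (ENNReal.ofReal_le_iff_le_toReal (measure_ne_top _ _)).mp this
  -- F q ≤ α
  have hFq_le : F q ≤ α := by
    have hmono : Monotone (fun n : ℕ => {ω' | ξ' ω' ≤ q - 1 / ((n : ℝ) + 1)}) := by
      intro a b hab ω h
      simp only [Set.mem_setOf_eq] at h ⊢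
      have hab' : (a : ℝ) ≤ b := Nat.cast_le.mpr hab
      have hd : 1 / ((b : ℝ) + 1) ≤ 1 / ((a : ℝ) + 1) :=
        one_div_le_one_div_of_le (by positivity) (by linarith)
      linarith
    have hU : (⋃ n : ℕ, {ω' | ξ' ω' ≤ q - 1 / ((n : ℝ) + 1)}) = {ω' | ξ' ω' < q} := by
      ext ω
      simp only [Set.mem_iUnion, Set.mem_setOf_eq]
      constructor
      · rintro ⟨n, hn⟩
        have : (0 : ℝ) < 1 / ((n : ℝ) + 1) := by positivity
        linarith
      · intro h
        obtain ⟨n, hn⟩ := exists_nat_one_div_lt (sub_pos.mpr h)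
        exact ⟨n, by linarith⟩
    have h1 : Tendsto (fun n : ℕ => P {ω' | ξ' ω' ≤ q - 1 / ((n : ℝ) + 1)}) atTop
        (𝓝 (P {ω' | ξ' ω' < q})) := by
      have := tendsto_measure_iUnion_atTop (μ := P) hmono
      rwa [hU] at this
    have hle : ∀ n : ℕ, P {ω' | ξ' ω' ≤ q - 1 / ((n : ℝ) + 1)} ≤ ENNReal.ofReal α := by
      intro n
      have hpos : (0 : ℝ) < 1 / ((n : ℝ) + 1) := by positivity
      have hnotS : q - 1 / ((n : ℝ) + 1) ∉ S := fun hmem =>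
        absurd (csInf_le hSbdd hmem) (by push_neg; linarith)
      have : F (q - 1 / ((n : ℝ) + 1)) < α := by
        simpa only [hSdef, Set.mem_setOf_eq, not_le] using hnotS
      exact (ENNReal.le_ofReal_iff_toReal_le (measure_ne_top _ _) hα0.le).mpr this.le
    have hlt : P {ω' | ξ' ω' < q} ≤ ENNReal.ofReal α :=
      le_of_tendsto h1 (Eventually.of_forall hle)
    have hsplit : P {ω' | ξ' ω' ≤ q} ≤ P {ω' | ξ' ω' < q} + P {ω | ξ' ω = q} := by
      refine le_trans (measure_mono fun ω (h : ξ' ω ≤ q) => ?_) (measure_union_le _ _)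
      rcases lt_or_eq_of_le h with h' | h'
      · exact Or.inl h'
      · exact Or.inr h'
    rw [hatom' q, add_zero] at hsplit
    exact ENNReal.toReal_le_of_le_ofReal hα0.le (le_trans hsplit hlt)
  have hFq : F q = α := le_antisymm hFq_le hFq_ge
  -- probability of the upper tail
  have hPgt : (P {ω' | q < ξ' ω'}).toReal = 1 - α := by
    have hc : {ω' | q < ξ' ω'} = {ω' | ξ' ω' ≤ q}ᶜ := by
      ext ω; simp [not_le]
    rw [hc, prob_compl_eq_one_sub (measurableSet_le hmeas measurable_const),
      ENNReal.toReal_sub_of_le prob_le_one ENNReal.one_ne_top]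
    simp only [ENNReal.toReal_one]
    rw [show (P {ω' | ξ' ω' ≤ q}).toReal = α from hFq]
  -- integrability facts
  have hint : Integrable ξ' P := (hξ.integrable one_le_two).congr hae
  have hIy : Integrable (fun ω => max (ξ' ω - y) 0) P :=
    (hint.sub (integrable_const y)).pos_part
  have hIq : Integrable (fun ω => max (ξ' ω - q) 0) P :=
    (hint.sub (integrable_const q)).pos_part
  have hAmeas : MeasurableSet {ω' | q < ξ' ω'} := measurableSet_lt measurable_const hmeas
  have hIind : Integrable ({ω' | q < ξ' ω'}.indicator fun _ => q - y) P :=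
    (integrable_const (q - y)).indicator hAmeas
  -- pointwise inequality
  have hptwise : ∀ ω, max (ξ' ω - q) 0 + ({ω' | q < ξ' ω'}.indicator fun _ => q - y) ω
      ≤ max (ξ' ω - y) 0 := by
    intro ω
    rw [Set.indicator_apply]
    by_cases h : ω ∈ {ω' | q < ξ' ω'}
    · have hq' : q < ξ' ω := h
      rw [if_pos h, max_eq_left (by linarith)]
      calc ξ' ω - q + (q - y) = ξ' ω - y := by ring
        _ ≤ max (ξ' ω - y) 0 := le_max_left _ _
    · have hq' : ξ' ω ≤ q := not_lt.mp h
      rw [if_neg h, add_zero, max_eq_right (by linarith)]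
      exact le_max_right _ _
  -- key integral inequality
  have hkey : (∫ ω, max (ξ' ω - q) 0 ∂P) + (q - y) * (1 - α) ≤ ∫ ω, max (ξ' ω - y) 0 ∂P := by
    have h1 : ∫ ω, (max (ξ' ω - q) 0 + ({ω' | q < ξ' ω'}.indicator fun _ => q - y) ω) ∂P
        ≤ ∫ ω, max (ξ' ω - y) 0 ∂P :=
      integral_mono (hIq.add hIind) hIy hptwise
    rw [integral_add hIq hIind, integral_indicator_const _ hAmeas] at h1
    rw [measureReal_def, hPgt] at h1
    calc (∫ ω, max (ξ' ω - q) 0 ∂P) + (q - y) * (1 - α)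
        = (∫ ω, max (ξ' ω - q) 0 ∂P) + (1 - α) • (q - y) := by
          simp [smul_eq_mul]; ring
      _ ≤ ∫ ω, max (ξ' ω - y) 0 ∂P := h1
  -- rewrite both sides of the goal
  have hrw : ∀ z : ℝ, ∫ ω, (z + (1 - α)⁻¹ * max (ξ ω - z) 0) ∂P
      = z + (1 - α)⁻¹ * ∫ ω, max (ξ' ω - z) 0 ∂P := by
    intro z
    have hcongr : (fun ω => z + (1 - α)⁻¹ * max (ξ ω - z) 0)
        =ᵐ[P] fun ω => z + (1 - α)⁻¹ * max (ξ' ω - z) 0 :=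
      hae.mono fun ω h => by
        show z + (1 - α)⁻¹ * max (ξ ω - z) 0 = z + (1 - α)⁻¹ * max (ξ' ω - z) 0
        rw [h]
    have hIz : Integrable (fun ω => max (ξ' ω - z) 0) P :=
      (hint.sub (integrable_const z)).pos_part
    rw [integral_congr_ae hcongr,
      integral_add (integrable_const z) (hIz.const_mul ((1 - α)⁻¹)),
      integral_const, integral_const_mul]
    simp
  rw [hrw q, hrw y]
  -- conclude by arithmetic
  have hc0 : (0 : ℝ) < (1 - α)⁻¹ := by
    apply inv_pos.mpr; linarith
  have hc1 : (1 - α)⁻¹ * (1 - α) = 1 := inv_mul_cancel₀ (by linarith)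
  have h2 : (1 - α)⁻¹ * ((∫ ω, max (ξ' ω - q) 0 ∂P) + (q - y) * (1 - α))
      ≤ (1 - α)⁻¹ * ∫ ω, max (ξ' ω - y) 0 ∂P := by
    exact mul_le_mul_of_nonneg_left hkey hc0.le
  have h3 : (1 - α)⁻¹ * ((∫ ω, max (ξ' ω - q) 0 ∂P) + (q - y) * (1 - α))
      = (1 - α)⁻¹ * (∫ ω, max (ξ' ω - q) 0 ∂P) + (q - y) := by
    linear_combination (q - y) * hc1
  linarith [h2, h3]
end

section
/- Let f : ℝ × ℝ^m → ℝ satisfy: (i) f(ax, ay) = a·f(x,y) for all a > 0 and inf_y f(0,y) = 0; (ii) x ↦ f(x,y) is non-decreasing for each y; (iii) f(x₁+x₂, y₁+y₂) ≤ f(x₁,y₁) + f(x₂,y₂); (iv) for every a ∈ ℝ there is a bijection φ : ℝ^m → ℝ^m with f(x+a, y) = f(x, φ(y)) + a for all (x,y). Then ρ(ξ) := inf_{y ∈ ℝ^m} E[f(ξ,y)] is a coherent risk measure on L²(Ω): it is positively homogeneous (ρ(a ξ) = a ρ(ξ) for a ≥ 0), monotone (ξ ≤ ξ' a.s. implies ρ(ξ)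 ≤ ρ(ξ')), subadditive (ρ(ξ₁+ξ₂) ≤ ρ(ξ₁)+ρ(ξ₂)), and translation-invariant (ρ(ξ+a) = ρ(ξ)+a for a ∈ ℝ). -/
open MeasureTheory

private lemma ciInf_add_const' {ι : Type*} [Nonempty ι] (g : ι → ℝ)
    (hb : BddBelow (Set.range g)) (a : ℝ) : (⨅ i, g i + a) = (⨅ i, g i) + a := by
  refine le_antisymm ?_ (le_ciInf fun i => add_le_add_left (ciInf_le hb i) a)
  refine le_ciInf_add fun i => ciInf_le ?_ i
  obtain ⟨c, hc⟩ := hb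
  exact ⟨c + a, by rintro _ ⟨i, rfl⟩; exact add_le_add_left (hc ⟨i, rfl⟩) a⟩

private lemma iInf_comp_equiv {ι : Type*} (g : ι → ℝ) (φ : ι ≃ ι) :
    (⨅ i, g (φ i)) = ⨅ i, g i := by
  simp only [iInf]
  congr 1
  exact φ.surjective.range_comp g

/-- Coherence of extremal risk measures: under positive-homogeneity/normalization,
monotonicity, sub-additivity and a translation property of `f`, the extremal risk measure
`ρ(ξ) = inf_y E[f(ξ, y)]` is coherent on L²(Ω). -/
theorem stmt_3 {Ω : Type*} [MeasurableSpace Ω] (P : Measure Ω) [IsProbabilityMeasure P]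
    (m : ℕ) (f : ℝ → (Fin m → ℝ) → ℝ)
    -- finiteness of expectations and of the infimum for square-integrable variables
    (hint : ∀ (ξ : Ω → ℝ), MemLp ξ 2 P → ∀ y : Fin m → ℝ,
      Integrable (fun ω => f (ξ ω) y) P)
    (hbdd : ∀ (ξ : Ω → ℝ), MemLp ξ 2 P →
      BddBelow (Set.range fun y : Fin m → ℝ => ∫ ω, f (ξ ω) y ∂P))
    -- (i) positive-homogeneity and normalization
    (hhom : ∀ a : ℝ, 0 < a → ∀ (x : ℝ) (y : Fin m → ℝ), f (a * x) (a • y) = a * f x y)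
    (hnorm : (⨅ y : Fin m → ℝ, f 0 y) = 0)
    -- (ii) monotonicity
    (hmono : ∀ y : Fin m → ℝ, Monotone fun x => f x y)
    -- (iii) sub-additivity
    (hsub : ∀ (x₁ x₂ : ℝ) (y₁ y₂ : Fin m → ℝ),
      f (x₁ + x₂) (y₁ + y₂) ≤ f x₁ y₁ + f x₂ y₂)
    -- (iv) translation
    (htrans : ∀ a : ℝ, ∃ φ : (Fin m → ℝ) ≃ (Fin m → ℝ),
      ∀ (x : ℝ) (y : Fin m → ℝ), f (x + a) y = f x (φ y) + a) :
    -- ρ is a coherent risk measure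
    (∀ (a : ℝ), 0 ≤ a → ∀ (ξ : Ω → ℝ), MemLp ξ 2 P →
      (⨅ y : Fin m → ℝ, ∫ ω, f (a * ξ ω) y ∂P)
        = a * ⨅ y : Fin m → ℝ, ∫ ω, f (ξ ω) y ∂P) ∧
    (∀ (ξ ξ' : Ω → ℝ), MemLp ξ 2 P → MemLp ξ' 2 P → (∀ᵐ ω ∂P, ξ ω ≤ ξ' ω) →
      (⨅ y : Fin m → ℝ, ∫ ω, f (ξ ω) y ∂P)
        ≤ ⨅ y : Fin m → ℝ, ∫ ω, f (ξ' ω) y ∂P) ∧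
    (∀ (ξ₁ ξ₂ : Ω → ℝ), MemLp ξ₁ 2 P → MemLp ξ₂ 2 P →
      (⨅ y : Fin m → ℝ, ∫ ω, f (ξ₁ ω + ξ₂ ω) y ∂P)
        ≤ (⨅ y : Fin m → ℝ, ∫ ω, f (ξ₁ ω) y ∂P)
          + ⨅ y : Fin m → ℝ, ∫ ω, f (ξ₂ ω) y ∂P) ∧
    (∀ (a : ℝ) (ξ : Ω → ℝ), MemLp ξ 2 P →
      (⨅ y : Fin m → ℝ, ∫ ω, f (ξ ω + a) y ∂P)
        = (⨅ y : Fin m → ℝ, ∫ ω, f (ξ ω) y ∂P) + a) := by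
  refine ⟨?_, ?_, ?_, ?_⟩
  · -- positive homogeneity
    intro a ha ξ hξ
    rcases eq_or_lt_of_le ha with rfl | ha
    · simp only [zero_mul]
      have : ∀ y : Fin m → ℝ, (∫ ω, f 0 y ∂P) = f 0 y := fun y => by simp
      simp_rw [this, hnorm]
    · -- a > 0
      have φ : (Fin m → ℝ) ≃ (Fin m → ℝ) :=
        { toFun := fun y => a • y
          invFun := fun y => a⁻¹ • y
          left_inv := fun y => by simp [smul_smul, inv_mul_cancel₀ ha.ne']
          right_inv := fun y => by simp [smul_smul, mul_inv_cancel₀ ha.ne'] }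
      have hsurj : Function.Surjective (fun y : Fin m → ℝ => a • y) := fun y =>
        ⟨a⁻¹ • y, by simp [smul_smul, mul_inv_cancel₀ ha.ne']⟩
      have key : (⨅ y : Fin m → ℝ, ∫ ω, f (a * ξ ω) y ∂P)
          = ⨅ y : Fin m → ℝ, ∫ ω, f (a * ξ ω) (a • y) ∂P := by
        simp only [iInf]
        congr 1
        exact (hsurj.range_comp fun y => ∫ ω, f (a * ξ ω) y ∂P).symm
      rw [key]
      have : ∀ y : Fin m → ℝ, (∫ ω, f (a * ξ ω) (a • y) ∂P) = a * ∫ ω, f (ξ ω) y ∂P := by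
        intro y
        rw [← integral_const_mul]
        exact integral_congr_ae (Filter.Eventually.of_forall fun ω => hhom a ha (ξ ω) y)
      simp_rw [this]
      exact (Real.mul_iInf_of_nonneg ha.le _).symm
  · -- monotonicity
    intro ξ ξ' hξ hξ' hle
    refine le_ciInf fun y => (ciInf_le (hbdd ξ hξ) y).trans ?_
    exact integral_mono_ae (hint ξ hξ y) (hint ξ' hξ' y) (hle.mono fun ω h => hmono y h)
  · -- subadditivity
    intro ξ₁ ξ₂ hξ₁ hξ₂
    have hsum : MemLp (fun ω => ξ₁ ω + ξ₂ ω) 2 P := hξ₁.add hξ₂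
    refine le_ciInf_add_ciInf fun y₁ y₂ => (ciInf_le (hbdd _ hsum) (y₁ + y₂)).trans ?_
    calc (∫ ω, f (ξ₁ ω + ξ₂ ω) (y₁ + y₂) ∂P)
        ≤ ∫ ω, (f (ξ₁ ω) y₁ + f (ξ₂ ω) y₂) ∂P :=
          integral_mono (hint _ hsum _) ((hint ξ₁ hξ₁ y₁).add (hint ξ₂ hξ₂ y₂))
            (fun ω => hsub (ξ₁ ω) (ξ₂ ω) y₁ y₂)
      _ = (∫ ω, f (ξ₁ ω) y₁ ∂P) + ∫ ω, f (ξ₂ ω) y₂ ∂P :=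
          integral_add (hint ξ₁ hξ₁ y₁) (hint ξ₂ hξ₂ y₂)
  · -- translation invariance
    intro a ξ hξ
    obtain ⟨φ, hφ⟩ := htrans a
    have h1 : ∀ y : Fin m → ℝ, (∫ ω, f (ξ ω + a) y ∂P)
        = (∫ ω, f (ξ ω) (φ y) ∂P) + a := by
      intro y
      have : (∫ ω, f (ξ ω + a) y ∂P) = ∫ ω, (f (ξ ω) (φ y) + a) ∂P :=
        integral_congr_ae (Filter.Eventually.of_forall fun ω => hφ (ξ ω) y)
      rw [this, integral_add (hint ξ hξ (φ y)) (integrable_const a)]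
      simp
    simp_rw [h1]
    have hb : BddBelow (Set.range fun y : Fin m → ℝ => ∫ ω, f (ξ ω) (φ y) ∂P) := by
      obtain ⟨c, hc⟩ := hbdd ξ hξ
      exact ⟨c, by rintro _ ⟨y, rfl⟩; exact hc ⟨φ y, rfl⟩⟩
    rw [ciInf_add_const' _ hb a, iInf_comp_equiv (fun y => ∫ ω, f (ξ ω) y ∂P) φ]
end

section
/- Differentiability of the outer value function: under the assumptions that y ↦ f(x,y) is uniformly M-semiconcave and differentiable in y, that V(y) := inf_{A ∈ 𝒜} E[f(g(X^A_T), y)] is convex and finite, and that for fixed y there exists an optimal control A with V(y) = E[f(g(X^A_T), y)], the function V is differentiable at y with gradient ∇V(y) = E[D_y f(g(X^A_T), y)]. -/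
open MeasureTheory
open scoped RealInnerProductSpace

/-- Differentiability of the outer value function: under uniform semiconcavity of `f` in `y`,
convexity of `V`, and existence of an optimal control at `y`, the value function `V` is
differentiable at `y` with gradient `E[D_y f(g(X^A_T), y)]`. -/
theorem stmt_10 {Ω : Type*} [MeasurableSpace Ω] (P : Measure Ω) [IsProbabilityMeasure P]
    {𝒜 : Type*} [Nonempty 𝒜] (n m : ℕ)
    (X : 𝒜 → Ω → (Fin n → ℝ)) (g : (Fin n → ℝ) → ℝ)
    (f : ℝ → EuclideanSpace ℝ (Fin m) → ℝ)
    (Df : ℝ → EuclideanSpace ℝ (Fin m) → EuclideanSpace ℝ (Fin m))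
    (hdiff : ∀ (x : ℝ) (y : EuclideanSpace ℝ (Fin m)), HasGradientAt (f x) (Df x y) y)
    (M : ℝ) (hM : 0 < M)
    (hsc : ∀ (x : ℝ) (y ξ : EuclideanSpace ℝ (Fin m)),
      f x (y + ξ) ≤ f x y + ⟪ξ, Df x y⟫ + M / 2 * ‖ξ‖ ^ 2)
    (hint : ∀ (A : 𝒜) (y : EuclideanSpace ℝ (Fin m)),
      Integrable (fun ω => f (g (X A ω)) y) P)
    (hintD : ∀ (A : 𝒜) (y : EuclideanSpace ℝ (Fin m)),
      Integrable (fun ω => Df (g (X A ω)) y) P)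
    (hbdd : ∀ y : EuclideanSpace ℝ (Fin m),
      BddBelow (Set.range fun A : 𝒜 => ∫ ω, f (g (X A ω)) y ∂P))
    (V : EuclideanSpace ℝ (Fin m) → ℝ)
    (hV : ∀ y, V y = ⨅ A : 𝒜, ∫ ω, f (g (X A ω)) y ∂P)
    (hconv : ConvexOn ℝ Set.univ V)
    (y : EuclideanSpace ℝ (Fin m)) (A : 𝒜)
    (hopt : V y = ∫ ω, f (g (X A ω)) y ∂P) :
    HasGradientAt V (∫ ω, Df (g (X A ω)) y ∂P) y := by
  set p : EuclideanSpace ℝ (Fin m) := ∫ ω, Df (g (X A ω)) y ∂P with hp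
  -- upper quadratic bound
  have key : ∀ ξ : EuclideanSpace ℝ (Fin m),
      V (y + ξ) ≤ V y + ⟪ξ, p⟫ + M / 2 * ‖ξ‖ ^ 2 := by
    intro ξ
    have h1 : V (y + ξ) ≤ ∫ ω, f (g (X A ω)) (y + ξ) ∂P := by
      rw [hV (y + ξ)]
      exact ciInf_le (hbdd (y + ξ)) A
    have hA : Integrable (fun ω => f (g (X A ω)) y + ⟪ξ, Df (g (X A ω)) y⟫) P :=
      (hint A y).add (Integrable.const_inner ξ (hintD A y))
    have hint2 : Integrable
        (fun ω => f (g (X A ω)) y + ⟪ξ, Df (g (X A ω)) y⟫ + M / 2 * ‖ξ‖ ^ 2) P :=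
      hA.add (integrable_const _)
    have h2 : ∫ ω, f (g (X A ω)) (y + ξ) ∂P ≤
        ∫ ω, (f (g (X A ω)) y + ⟪ξ, Df (g (X A ω)) y⟫ + M / 2 * ‖ξ‖ ^ 2) ∂P := by
      refine integral_mono (hint A (y + ξ)) hint2 fun ω => hsc _ _ _
    have h3 : ∫ ω, (f (g (X A ω)) y + ⟪ξ, Df (g (X A ω)) y⟫ + M / 2 * ‖ξ‖ ^ 2) ∂P
        = V y + ⟪ξ, p⟫ + M / 2 * ‖ξ‖ ^ 2 := by
      rw [integral_add hA (integrable_const _),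
        integral_add (hint A y) (Integrable.const_inner ξ (hintD A y)),
        integral_inner (hintD A y) ξ, integral_const]
      simp [hopt, hp]
    linarith [h2.trans_eq h3]
  -- lower bound via convexity
  have lowkey : ∀ ξ : EuclideanSpace ℝ (Fin m),
      V y + ⟪ξ, p⟫ - M / 2 * ‖ξ‖ ^ 2 ≤ V (y + ξ) := by
    intro ξ
    have hmid := hconv.2 (Set.mem_univ (y + ξ)) (Set.mem_univ (y - ξ))
      (by norm_num : (0:ℝ) ≤ 1/2) (by norm_num : (0:ℝ) ≤ 1/2) (by norm_num)
    have heq : (1/2 : ℝ) • (y + ξ) + (1/2 : ℝ) • (y - ξ) = y := by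
      module
    rw [heq, smul_eq_mul, smul_eq_mul] at hmid
    have hneg := key (-ξ)
    have : y + -ξ = y - ξ := by abel
    rw [this] at hneg
    have hin : ⟪-ξ, p⟫ = -⟪ξ, p⟫ := by
      simp [inner_neg_left]
    rw [hin] at hneg
    have hnn : ‖-ξ‖ = ‖ξ‖ := norm_neg ξ
    rw [hnn] at hneg
    linarith
  rw [hasGradientAt_iff_isLittleO, Asymptotics.isLittleO_iff]
  intro ε hε
  filter_upwards [Metric.ball_mem_nhds y (by positivity : (0:ℝ) < 2 * ε / M)] with x hx
  have hxy : ‖x - y‖ < 2 * ε / M := by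
    rwa [Metric.mem_ball, dist_eq_norm] at hx
  have hx0 : (0:ℝ) ≤ ‖x - y‖ := norm_nonneg _
  have h1 := key (x - y)
  have h2 := lowkey (x - y)
  have hxx : y + (x - y) = x := by abel
  rw [hxx] at h1 h2
  have hsymm : ⟪p, x - y⟫ = ⟪x - y, p⟫ := real_inner_comm _ _
  have habs : |V x - V y - ⟪p, x - y⟫| ≤ M / 2 * ‖x - y‖ ^ 2 := by
    rw [hsymm]; rw [abs_le]; constructor <;> linarith
  have h5 : ‖x - y‖ * M ≤ 2 * ε := (le_div_iff₀ hM).mp hxy.le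
  have hb : M / 2 * ‖x - y‖ ^ 2 ≤ ε * ‖x - y‖ := by
    nlinarith [mul_le_mul_of_nonneg_left h5 hx0]
  calc ‖V x - V y - ⟪p, x - y⟫‖ = |V x - V y - ⟪p, x - y⟫| := rfl
    _ ≤ M / 2 * ‖x - y‖ ^ 2 := habs
    _ ≤ ε * ‖x - y‖ := hb
    _ ≤ ε * ‖x - y‖ := le_refl _
end

section
/- Explicit inf-convolution of the mean-CVaR integrand: let λ > 0, α ∈ (0,1), ε > 0, and define h(x,y) := −x + λ(y + (1−α)⁻¹(−x − y)⁺) (equal to f(g(x),y) with g(x) = −x). Then its inf-convolution in y, h_ε(x,y) := inf_{z ∈ ℝ}[h(x,z) + (y−z)²/(2ε)], equals: −x + λ(y − (x+y)/(1−α)) − (1/2)(αλ/(1−α))²ε when x+y < −αλε/(1−α); (y+x)²/(2ε) − (1+λ)x when −αλε/(1−α) ≤ x+y ≤ λε; and −x + λy − λ²ε/2 when x+y > λε. -/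
private lemma my_ciInf_eq (f : ℝ → ℝ) (v z₀ : ℝ) (hv : ∀ z, v ≤ f z) (h0 : f z₀ = v) :
    (⨅ z, f z) = v := by
  refine le_antisymm (h0 ▸ ciInf_le ⟨v, ?_⟩ z₀) (le_ciInf hv)
  rintro _ ⟨z, rfl⟩; exact hv z

set_option maxHeartbeats 1000000 in
/-- Explicit inf-convolution of the mean-CVaR integrand
`h(x,y) = −x + λ(y + (1−α)⁻¹(−x − y)⁺)`. -/
theorem stmt_18 (lam α ε : ℝ) (hlam : 0 < lam) (hα : α ∈ Set.Ioo (0 : ℝ) 1) (hε : 0 < ε)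
    (h : ℝ → ℝ → ℝ)
    (hh : ∀ x y : ℝ, h x y = -x + lam * (y + (1 - α)⁻¹ * max (-x - y) 0))
    (hε' : ℝ → ℝ → ℝ)
    (hhε : ∀ x y : ℝ, hε' x y = ⨅ z : ℝ, h x z + (y - z) ^ 2 / (2 * ε)) :
    ∀ x y : ℝ,
      (x + y < -(α * lam * ε) / (1 - α) →
        hε' x y = -x + lam * (y - (x + y) / (1 - α)) - 1 / 2 * (α * lam / (1 - α)) ^ 2 * ε) ∧
      (-(α * lam * ε) / (1 - α) ≤ x + y ∧ x + y ≤ lam * ε →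
        hε' x y = (y + x) ^ 2 / (2 * ε) - (1 + lam) * x) ∧
      (lam * ε < x + y →
        hε' x y = -x + lam * y - lam ^ 2 * ε / 2) := by
  intro x y
  obtain ⟨hα0, hα1⟩ := hα
  have hβ : (0 : ℝ) < 1 - α := by linarith
  have hβ' : (1 - α) ≠ 0 := ne_of_gt hβ
  have hc : (1 - α) * (1 - α)⁻¹ = 1 := mul_inv_cancel₀ hβ'
  have hcpos : (0 : ℝ) < (1 - α)⁻¹ := inv_pos.mpr hβ
  simp only [hhε, hh]
  refine ⟨?_, ?_, ?_⟩
  · -- x + y < -(α lam ε)/(1-α)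
    intro hcase
    have hcase' : (x + y) * (1 - α) < -(α * lam * ε) := by
      rw [lt_div_iff₀ hβ] at hcase; linarith [hcase]
    apply my_ciInf_eq _ _ (y + α * lam / (1 - α) * ε)
    · intro z
      rw [← sub_nonneg]
      rcases le_total (-x - z) 0 with h1 | h1
      · rw [max_eq_right h1]
        have key : -x + lam * (z + (1 - α)⁻¹ * 0) + (y - z) ^ 2 / (2 * ε)
            - (-x + lam * (y - (x + y) / (1 - α)) - 1 / 2 * (α * lam / (1 - α)) ^ 2 * ε)
            = (2*ε*(1-α)^2*lam*(z-y) + 2*ε*(1-α)*lam*(x+y) + α^2*lam^2*ε^2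
                + (1-α)^2*(y-z)^2) / (2*ε*(1-α)^2) := by
          field_simp; ring
        rw [key]
        apply div_nonneg _ (by positivity)
        nlinarith [sq_nonneg ((1-α)*(y-z) + α*lam*ε),
          mul_nonneg (mul_nonneg (mul_nonneg hε.le hβ.le) hlam.le)
            (by linarith : (0:ℝ) ≤ x + z)]
      · rw [max_eq_left h1]
        have key : -x + lam * (z + (1 - α)⁻¹ * (-x - z)) + (y - z) ^ 2 / (2 * ε)
            - (-x + lam * (y - (x + y) / (1 - α)) - 1 / 2 * (α * lam / (1 - α)) ^ 2 * ε)
            = (2*ε*(1-α)^2*lam*(z-y) + 2*ε*(1-α)*lam*(y-z) + α^2*lam^2*ε^2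
                + (1-α)^2*(y-z)^2) / (2*ε*(1-α)^2) := by
          field_simp; ring
        rw [key]
        apply div_nonneg _ (by positivity)
        nlinarith [sq_nonneg ((1-α)*(y-z) + α*lam*ε)]
    · have hpos : 0 ≤ -x - (y + α * lam / (1 - α) * ε) := by
        have h2 := mul_lt_mul_of_pos_right hcase' hcpos
        have h4 : x + y < -(α * lam * ε) * (1 - α)⁻¹ := by
          calc x + y = (x + y) * ((1 - α) * (1 - α)⁻¹) := by rw [hc]; ring
            _ = (x + y) * (1 - α) * (1 - α)⁻¹ := by ring
            _ < -(α * lam * ε) * (1 - α)⁻¹ := h2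
        have h3 : α * lam / (1 - α) * ε = α * lam * ε * (1 - α)⁻¹ := by ring
        rw [h3]
        linarith
      rw [max_eq_left hpos]
      field_simp
      ring
  · -- middle regime
    rintro ⟨hc1, hc2⟩
    have hc1' : -(α * lam * ε) ≤ (x + y) * (1 - α) := (div_le_iff₀ hβ).mp hc1
    apply my_ciInf_eq _ _ (-x)
    · intro z
      rw [← sub_nonneg]
      rcases le_total (-x - z) 0 with h1 | h1
      · rw [max_eq_right h1]
        have key : -x + lam * (z + (1 - α)⁻¹ * 0) + (y - z) ^ 2 / (2 * ε)
            - ((y + x) ^ 2 / (2 * ε) - (1 + lam) * x)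
            = (2*ε*lam*(z+x) + (y-z)^2 - (y+x)^2) / (2*ε) := by
          field_simp; ring
        rw [key]
        apply div_nonneg _ (by positivity)
        nlinarith [sq_nonneg (z + x), mul_nonneg (by linarith : (0:ℝ) ≤ z + x)
          (by linarith : (0:ℝ) ≤ lam * ε - (x + y))]
      · rw [max_eq_left h1]
        have key : -x + lam * (z + (1 - α)⁻¹ * (-x - z)) + (y - z) ^ 2 / (2 * ε)
            - ((y + x) ^ 2 / (2 * ε) - (1 + lam) * x)
            = (2*ε*(1-α)*lam*(z+x) + 2*ε*lam*(-x-z)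
                + (1-α)*((y-z)^2 - (y+x)^2)) / (2*ε*(1-α)) := by
          field_simp; ring
        rw [key]
        apply div_nonneg _ (by positivity)
        nlinarith [mul_nonneg h1 (by linarith : (0:ℝ) ≤ 2*α*ε*lam + 2*(1-α)*(x+y)),
          mul_nonneg hβ.le (sq_nonneg (-x - z))]
    · rw [show -x - -x = (0:ℝ) by ring, max_self, mul_zero]
      field_simp
      ring
  · -- x + y > lam ε
    intro hcase
    apply my_ciInf_eq _ _ (y - lam * ε)
    · intro z
      rw [← sub_nonneg]
      rcases le_total (-x - z) 0 with h1 | h1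
      · rw [max_eq_right h1]
        have key : -x + lam * (z + (1 - α)⁻¹ * 0) + (y - z) ^ 2 / (2 * ε)
            - (-x + lam * y - lam ^ 2 * ε / 2)
            = (2*ε*lam*(z-y) + (y-z)^2 + lam^2*ε^2) / (2*ε) := by
          field_simp; ring
        rw [key]
        apply div_nonneg _ (by positivity)
        nlinarith [sq_nonneg (y - z - lam * ε)]
      · rw [max_eq_left h1]
        have key : -x + lam * (z + (1 - α)⁻¹ * (-x - z)) + (y - z) ^ 2 / (2 * ε)
            - (-x + lam * y - lam ^ 2 * ε / 2)
            = (2*ε*(1-α)*lam*(z-y) + 2*ε*lam*(-x-z)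
                + (1-α)*((y-z)^2 + lam^2*ε^2)) / (2*ε*(1-α)) := by
          field_simp; ring
        rw [key]
        apply div_nonneg _ (by positivity)
        nlinarith [mul_nonneg hβ.le (sq_nonneg (y - z - lam * ε)),
          mul_nonneg (mul_nonneg hε.le hlam.le) h1]
    · have hle : -x - (y - lam * ε) ≤ 0 := by linarith
      rw [max_eq_right hle]
      field_simp
      ring
end
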